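/- Let $\Omega \subset \mathbb{R}^N$ be a bounded domain, $2 < q < 3$, $\lambda_q = (q-1)/(q-2)$, $\phi \in H^1_0(\Omega)$ a weak solution of $-\Delta\phi = \lambda_q|\phi|^{q-2}\phi$, and $J'(u) = -\Delta u - \lambda_q|u|^{q-2}u \in H^{-1}(\Omega)$. Then for every $u \in H^1_0(\Omega)$: $\|J'(u) - \mathcal{L}_\phi(u - \phi)\|_{H^{-1}(\Omega)} \le \lambda_q(q-1) C_q \|u - \phi\|_{L^q(\Omega)}^{q-1}$, where $\mathcal{L}_\phi = -\Delta - \lambda_q(q-1)|\phi|^{q-2}$ and $C_q$ is the norm of the embedding $L^{q'}(\Omega) \hookrightarrow H^{-1}(\Omega)$. -/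

import Mathlib

open MeasureTheory
open scoped RealInnerProductSpace

/-- With `Ω`, `2 < q < 3`, `λ_q = (q-1)/(q-2)`, `H ≅ H¹₀(Ω)` (realized
by `T`, with Sobolev constant `Cq`, whence `L^{q'}(Ω) ↪ H⁻¹(Ω)` with norm `Cq` by
duality), a weak solution `φ` of `-Δ φ = λ_q |φ|^(q-2) φ`, and any `u ∈ H¹₀(Ω)`:
`‖J'(u) - 𝓛_φ(u-φ)‖_{H⁻¹} ≤ λ_q (q-1) Cq ‖u-φ‖_{L^q}^{q-1}`.
The functional `J'(u) - 𝓛_φ(u-φ) ∈ H⁻¹(Ω)` is the continuous linear functional `F` with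
`F z = -λ_q ∫ (|u|^(q-2)u - |φ|^(q-2)φ - (q-1)|φ|^(q-2)(u-φ)) z` (`hF`), and the
`H⁻¹`-norm is the dual norm `‖F‖`. -/

lemma my_hasDerivAt_abs_rpow_mul_self {s : ℝ} (hs : 0 < s) (t : ℝ) :
    HasDerivAt (fun t : ℝ => |t| ^ s * t) ((s + 1) * |t| ^ s) t := by
  rcases eq_or_ne t 0 with rfl | ht
  · rw [abs_zero, Real.zero_rpow hs.ne', mul_zero, hasDerivAt_iff_tendsto_slope]
    have h1 : (fun y : ℝ => |y| ^ s) =ᶠ[nhdsWithin 0 {(0:ℝ)}ᶜ]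
        slope (fun t : ℝ => |t| ^ s * t) 0 := by
      filter_upwards [self_mem_nhdsWithin] with y hy
      have hy' : (y : ℝ) ≠ 0 := hy
      simp only [slope_def_field, abs_zero, Real.zero_rpow hs.ne', mul_zero, zero_mul, sub_zero]
      rw [mul_div_assoc, div_self hy', mul_one]
    refine Filter.Tendsto.congr' h1 ?_
    have hc : ContinuousAt (fun y : ℝ => |y| ^ s) 0 := by
      have := (Real.continuousAt_rpow_const |(0:ℝ)| s (Or.inr hs.le)).comp
        continuous_abs.continuousAt
      exact this
    have := hc.tendsto
    rw [abs_zero, Real.zero_rpow hs.ne'] at this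
    exact this.mono_left nhdsWithin_le_nhds
  · have habs : HasDerivAt (fun t : ℝ => |t|) (SignType.sign t : ℝ) t := hasDerivAt_abs ht
    have hr : HasDerivAt (fun y : ℝ => y ^ s) (s * |t| ^ (s - 1)) |t| :=
      Real.hasDerivAt_rpow_const (Or.inl (abs_ne_zero.mpr ht))
    have h1 : HasDerivAt (fun t : ℝ => |t| ^ s) (s * |t| ^ (s - 1) * (SignType.sign t : ℝ)) t :=
      hr.comp t habs
    have h2 := h1.mul (hasDerivAt_id t)
    refine h2.congr_deriv ?_
    symm
    have hsg : (SignType.sign t : ℝ) * t = |t| := by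
      rcases ht.lt_or_gt with h | h
      · simp [sign_neg h, abs_of_neg h]
      · simp [sign_pos h, abs_of_pos h]
    have habs' : |t| ^ (s - 1) * |t| = |t| ^ s := by
      rw [← Real.rpow_add_one (abs_ne_zero.mpr ht) (s - 1), sub_add_cancel]
    calc (s + 1) * |t| ^ s = s * (|t| ^ (s - 1) * |t|) + |t| ^ s := by rw [habs']; ring
    _ = s * |t| ^ (s - 1) * (SignType.sign t : ℝ) * t + |t| ^ s * 1 := by
        rw [mul_assoc (s * |t| ^ (s-1)), hsg, mul_one]; ring
    _ = _ := by simp [id]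

lemma my_rpow_add_le {s : ℝ} (hs0 : 0 ≤ s) (hs1 : s ≤ 1) {a b : ℝ} (ha : 0 ≤ a) (hb : 0 ≤ b) :
    (a + b) ^ s ≤ a ^ s + b ^ s := by
  lift a to NNReal using ha
  lift b to NNReal using hb
  have := NNReal.rpow_add_le_add_rpow a b hs0 hs1
  exact_mod_cast this

lemma my_abs_rpow_sub_abs_rpow_le {s : ℝ} (hs0 : 0 < s) (hs1 : s ≤ 1) (a b : ℝ) :
    |(|a| ^ s - |b| ^ s)| ≤ |a - b| ^ s := by
  have key : ∀ x y : ℝ, |x| ^ s - |y| ^ s ≤ |x - y| ^ s := by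
    intro x y
    have h1 : |x| ≤ |y| + |x - y| := by
      calc |x| = |y + (x - y)| := by ring_nf
      _ ≤ |y| + |x - y| := abs_add_le _ _
    have h2 : |x| ^ s ≤ (|y| + |x - y|) ^ s :=
      Real.rpow_le_rpow (abs_nonneg x) h1 hs0.le
    have h3 := my_rpow_add_le hs0.le hs1 (abs_nonneg y) (abs_nonneg (x - y))
    linarith
  rw [abs_sub_le_iff]
  refine ⟨key a b, ?_⟩
  have := key b a
  rwa [abs_sub_comm b a] at this

lemma my_key_ptwise {s : ℝ} (hs0 : 0 < s) (hs1 : s ≤ 1) (a b : ℝ) :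
    |(|a| ^ s * a - |b| ^ s * b - (s + 1) * |b| ^ s * (a - b))| ≤
      (s + 1) * |a - b| ^ s * |a - b| := by
  set c : ℝ := (s + 1) * |b| ^ s with hc
  set f : ℝ → ℝ := fun t => |t| ^ s * t - c * t with hf
  have hderiv : ∀ t, HasDerivAt f ((s + 1) * |t| ^ s - c) t := fun t =>
    (my_hasDerivAt_abs_rpow_mul_self hs0 t).sub (by simpa using (hasDerivAt_id t).const_mul c)
  have hbound : ∀ t ∈ Set.uIcc b a, ‖(s + 1) * |t| ^ s - c‖ ≤ (s + 1) * |a - b| ^ s := by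
    intro t ht
    rw [hc, Real.norm_eq_abs, ← mul_sub, abs_mul, abs_of_pos (by linarith : (0:ℝ) < s + 1)]
    have h1 : |(|t| ^ s - |b| ^ s)| ≤ |t - b| ^ s := my_abs_rpow_sub_abs_rpow_le hs0 hs1 t b
    have h2 : |t - b| ≤ |a - b| := Set.abs_sub_left_of_mem_uIcc ht
    have h3 : |t - b| ^ s ≤ |a - b| ^ s := Real.rpow_le_rpow (abs_nonneg _) h2 hs0.le
    have := h1.trans h3
    nlinarith [abs_nonneg (|t| ^ s - |b| ^ s)]
  have := Convex.norm_image_sub_le_of_norm_hasDerivWithin_le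
    (f' := fun t => (s + 1) * |t| ^ s - c)
    (fun t ht => (hderiv t).hasDerivWithinAt) hbound (convex_uIcc b a)
    (Set.left_mem_uIcc) (Set.right_mem_uIcc)
  rw [Real.norm_eq_abs, Real.norm_eq_abs] at this
  calc |(|a| ^ s * a - |b| ^ s * b - c * (a - b))|
      = |f a - f b| := by rw [hf]; ring_nf
  _ ≤ (s + 1) * |a - b| ^ s * |a - b| := this

lemma my_abs_rpow_mul_self {s : ℝ} (hs : 0 < s) (d : ℝ) :
    |d| ^ s * |d| = |d| ^ (s + 1) := by
  rcases eq_or_ne d 0 with rfl | hd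
  · simp [Real.zero_rpow hs.ne', Real.zero_rpow (by linarith : s + 1 ≠ 0)]
  · rw [Real.rpow_add_one (abs_ne_zero.mpr hd)]

theorem stmt_13 {N : ℕ} (Ω : Set (EuclideanSpace ℝ (Fin N)))
    (hΩopen : IsOpen Ω) (hΩconn : IsConnected Ω) (hΩbdd : Bornology.IsBounded Ω)
    (q : ℝ) (hq1 : 2 < q) (hq3 : q < 3)
    {H : Type*} [NormedAddCommGroup H] [InnerProductSpace ℝ H] [CompleteSpace H]
    (T : H →ₗ[ℝ] (EuclideanSpace ℝ (Fin N) → ℝ))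
    (hTmeas : ∀ u : H, Measurable (T u))
    (hTLq : ∀ u : H, MemLp (T u) (ENNReal.ofReal q) (volume.restrict Ω))
    (Cq : ℝ)
    (hCq : ∀ u : H,
      (eLpNorm (T u) (ENNReal.ofReal q) (volume.restrict Ω)).toReal ≤ Cq * ‖u‖)
    (φ u : H)
    (hφ : ∀ z : H, ⟪φ, z⟫ =
      (q - 1) / (q - 2) * ∫ x in Ω, |T φ x| ^ (q - 2) * T φ x * T z x)
    (F : H →L[ℝ] ℝ)
    (hF : ∀ z : H, F z = -((q - 1) / (q - 2))
      * ∫ x in Ω, (|T u x| ^ (q - 2) * T u x - |T φ x| ^ (q - 2) * T φ x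
          - (q - 1) * |T φ x| ^ (q - 2) * (T u x - T φ x)) * T z x) :
    ‖F‖ ≤ (q - 1) / (q - 2) * (q - 1) * Cq
        * ((eLpNorm (T u - T φ) (ENNReal.ofReal q) (volume.restrict Ω)).toReal) ^ (q - 1) := by
  have hq0 : (0:ℝ) < q := by linarith
  have hq2 : (0:ℝ) < q - 2 := by linarith
  have hs1 : q - 2 ≤ 1 := by linarith
  have hq1' : (0:ℝ) < q - 1 := by linarith
  have hlam : 0 < (q - 1) / (q - 2) := div_pos hq1' hq2
  set μ : Measure (EuclideanSpace ℝ (Fin N)) := volume.restrict Ω with hμdef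
  set w : EuclideanSpace ℝ (Fin N) → ℝ := T u - T φ with hwdef
  have hwx : ∀ x, w x = T u x - T φ x := fun x => rfl
  have hwm : MemLp w (ENNReal.ofReal q) μ := by
    have := hTLq (u - φ); rwa [map_sub] at this
  have hwmeas : Measurable w := (hTmeas u).sub (hTmeas φ)
  set D := (eLpNorm w (ENNReal.ofReal q) μ).toReal with hDdef
  set g : EuclideanSpace ℝ (Fin N) → ℝ := fun x =>
    |T u x| ^ (q - 2) * T u x - |T φ x| ^ (q - 2) * T φ x
      - (q - 1) * |T φ x| ^ (q - 2) * (T u x - T φ x) with hgdef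
  -- pointwise estimate
  have hgpt : ∀ x, |g x| ≤ (q - 1) * |w x| ^ (q - 1) := by
    intro x
    have h := my_key_ptwise hq2 hs1 (T u x) (T φ x)
    rw [show q - 2 + 1 = q - 1 from by ring] at h
    have h2 := my_abs_rpow_mul_self hq2 (T u x - T φ x)
    rw [show q - 2 + 1 = q - 1 from by ring] at h2
    calc |g x| ≤ (q - 1) * |T u x - T φ x| ^ (q - 2) * |T u x - T φ x| := h
    _ = (q - 1) * |w x| ^ (q - 1) := by rw [mul_assoc, h2, hwx]
  -- conjugate exponents
  have hpq : (q / (q - 1)).HolderConjugate q :=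
    (Real.HolderConjugate.conjExponent (by linarith : 1 < q)).symm
  set f1 : EuclideanSpace ℝ (Fin N) → ℝ := fun x => |w x| ^ (q - 1) with hf1def
  have hf1meas : Measurable f1 := hwmeas.abs.pow_const (q - 1)
  have hf1nonneg : ∀ x, 0 ≤ f1 x := fun x => Real.rpow_nonneg (abs_nonneg _) _
  have hf1m : MemLp f1 (ENNReal.ofReal (q / (q - 1))) μ := by
    refine ⟨hf1meas.aestronglyMeasurable, ?_⟩
    have h1 : f1 = fun x => ‖w x‖ ^ (q - 1) := by
      funext x; rw [Real.norm_eq_abs]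
    rw [h1, eLpNorm_norm_rpow w hq1']
    have h2 : ENNReal.ofReal (q / (q - 1)) * ENNReal.ofReal (q - 1) = ENNReal.ofReal q := by
      rw [← ENNReal.ofReal_mul (by positivity)]
      congr 1
      field_simp
    rw [h2]
    exact ENNReal.rpow_lt_top_of_nonneg hq1'.le hwm.eLpNorm_ne_top
  -- toReal of eLpNorm as integral
  have toRealLp : ∀ f : EuclideanSpace ℝ (Fin N) → ℝ, MemLp f (ENNReal.ofReal q) μ →
      (eLpNorm f (ENNReal.ofReal q) μ).toReal = (∫ x, ‖f x‖ ^ q ∂μ) ^ q⁻¹ := by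
    intro f hf
    rw [hf.eLpNorm_eq_integral_rpow_norm (ENNReal.ofReal_pos.mpr hq0).ne' ENNReal.ofReal_ne_top]
    rw [ENNReal.toReal_ofReal
      (Real.rpow_nonneg (integral_nonneg fun x => Real.rpow_nonneg (norm_nonneg _) _) _)]
    rw [ENNReal.toReal_ofReal hq0.le]
  set I : ℝ := ∫ x, ‖w x‖ ^ q ∂μ with hIdef
  have hInonneg : 0 ≤ I := integral_nonneg fun x => Real.rpow_nonneg (norm_nonneg _) _
  have hDI : D = I ^ q⁻¹ := toRealLp w hwm
  -- key bound
  have key : ∀ z : H, |F z| ≤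
      (q - 1) / (q - 2) * (q - 1) * D ^ (q - 1) * (Cq * ‖z‖) := by
    intro z
    rw [hF z, abs_mul, abs_neg, abs_of_pos hlam]
    have step0 : |∫ x, g x * T z x ∂μ| ≤ ∫ x, |g x| * |T z x| ∂μ := by
      simpa [Real.norm_eq_abs, abs_mul] using
        norm_integral_le_integral_norm (μ := μ) (f := fun x => g x * T z x)
    have hint : Integrable (fun x => f1 x * T z x) μ := by
      rw [← memLp_one_iff_integrable]
      have hm := (hTLq z).smul hf1m (r := 1) (hpqr := ⟨?_⟩)
      · have : (f1 • T z) = fun x => f1 x * T z x := by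
          funext x; simp [smul_eq_mul]
        rwa [this] at hm
      · rw [inv_one]
        exact hpq.inv_add_inv_ennreal
    have hint2 : Integrable (fun x => f1 x * |T z x|) μ := by
      have := hint.abs
      simpa [abs_mul, abs_of_nonneg (hf1nonneg _)] using this
    have step1 : ∫ x, |g x| * |T z x| ∂μ ≤ (q - 1) * ∫ x, f1 x * |T z x| ∂μ := by
      rw [← integral_const_mul]
      refine integral_mono_of_nonneg
        (Filter.Eventually.of_forall fun x => mul_nonneg (abs_nonneg _) (abs_nonneg _))
        (hint2.const_mul _) (Filter.Eventually.of_forall fun x => ?_)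
      calc |g x| * |T z x| ≤ ((q - 1) * |w x| ^ (q - 1)) * |T z x| :=
            mul_le_mul_of_nonneg_right (hgpt x) (abs_nonneg _)
      _ = (q - 1) * (f1 x * |T z x|) := by rw [hf1def]; ring
    have step2 : ∫ x, f1 x * |T z x| ∂μ ≤
        (∫ x, ‖f1 x‖ ^ (q / (q - 1)) ∂μ) ^ (1 / (q / (q - 1)))
          * (∫ x, ‖T z x‖ ^ q ∂μ) ^ (1 / q) := by
      have heq : ∫ x, f1 x * |T z x| ∂μ = ∫ x, ‖f1 x‖ * ‖T z x‖ ∂μ := by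
        refine integral_congr_ae (Filter.Eventually.of_forall fun x => ?_)
        simp [Real.norm_eq_abs, abs_of_nonneg (hf1nonneg x)]
      rw [heq]
      exact integral_mul_norm_le_Lp_mul_Lq hpq hf1m (hTLq z)
    -- identify first factor
    have hfac1 : (∫ x, ‖f1 x‖ ^ (q / (q - 1)) ∂μ) ^ (1 / (q / (q - 1))) = D ^ (q - 1) := by
      have h1 : (fun x => ‖f1 x‖ ^ (q / (q - 1))) = fun x => ‖w x‖ ^ q := by
        funext x
        rw [Real.norm_eq_abs (f1 x), abs_of_nonneg (hf1nonneg x), Real.norm_eq_abs (w x)]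
        show (|w x| ^ (q - 1)) ^ (q / (q - 1)) = |w x| ^ q
        rw [← Real.rpow_mul (abs_nonneg _)]
        congr 1
        field_simp
      rw [h1, hDI, ← Real.rpow_mul hInonneg]
      congr 1
      rw [one_div_div]
      field_simp
    have hfac2 : (∫ x, ‖T z x‖ ^ q ∂μ) ^ (1 / q) ≤ Cq * ‖z‖ := by
      have := hCq z
      rw [toRealLp (T z) (hTLq z)] at this
      rwa [one_div]
    have hfac1nonneg : (0:ℝ) ≤ D ^ (q - 1) := Real.rpow_nonneg ENNReal.toReal_nonneg _
    calc (q - 1) / (q - 2) * |∫ x, g x * T z x ∂μ|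
        ≤ (q - 1) / (q - 2) * ((q - 1) * ∫ x, f1 x * |T z x| ∂μ) := by
          apply mul_le_mul_of_nonneg_left _ hlam.le
          exact step0.trans step1
      _ ≤ (q - 1) / (q - 2) * ((q - 1) * (D ^ (q - 1) * (Cq * ‖z‖))) := by
          apply mul_le_mul_of_nonneg_left _ hlam.le
          apply mul_le_mul_of_nonneg_left _ hq1'.le
          calc ∫ x, f1 x * |T z x| ∂μ
              ≤ (∫ x, ‖f1 x‖ ^ (q / (q - 1)) ∂μ) ^ (1 / (q / (q - 1)))
                * (∫ x, ‖T z x‖ ^ q ∂μ) ^ (1 / q) := step2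
            _ = D ^ (q - 1) * (∫ x, ‖T z x‖ ^ q ∂μ) ^ (1 / q) := by rw [hfac1]
            _ ≤ D ^ (q - 1) * (Cq * ‖z‖) := by
                apply mul_le_mul_of_nonneg_left hfac2 hfac1nonneg
      _ = (q - 1) / (q - 2) * (q - 1) * D ^ (q - 1) * (Cq * ‖z‖) := by ring
  -- split on D
  rcases eq_or_lt_of_le (ENNReal.toReal_nonneg : (0:ℝ) ≤ D) with hD0 | hDpos
  · -- D = 0
    have hD0' : D = 0 := hD0.symm
    rw [hD0', Real.zero_rpow hq1'.ne', mul_zero]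
    refine ContinuousLinearMap.opNorm_le_bound F le_rfl fun z => ?_
    have hwz : w =ᵐ[μ] 0 := by
      have : eLpNorm w (ENNReal.ofReal q) μ = 0 := by
        rcases (ENNReal.toReal_eq_zero_iff _).mp hD0' with h | h
        · exact h
        · exact absurd h hwm.eLpNorm_ne_top
      exact (eLpNorm_eq_zero_iff hwm.1 (ENNReal.ofReal_pos.mpr hq0).ne').mp this
    have hzero : (fun x => g x * T z x) =ᵐ[μ] 0 := by
      filter_upwards [hwz] with x hx
      have h0 : T u x - T φ x = 0 := by rw [← hwx x]; exact hx
      have hx' : T u x = T φ x := by linarith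
      simp [hgdef, hx']
    rw [hF z, integral_congr_ae hzero]
    simp
  · -- D > 0
    have hCqpos : 0 < Cq := by
      have h1 := hCq (u - φ)
      rw [map_sub] at h1
      by_contra hc
      push_neg at hc
      have : Cq * ‖u - φ‖ ≤ 0 := mul_nonpos_of_nonpos_of_nonneg hc (norm_nonneg _)
      linarith [hDpos.trans_le h1]
    have hM : 0 ≤ (q - 1) / (q - 2) * (q - 1) * Cq * D ^ (q - 1) := by positivity
    refine ContinuousLinearMap.opNorm_le_bound F hM fun z => ?_
    have := key z
    rw [Real.norm_eq_abs]
    calc |F z| ≤ (q - 1) / (q - 2) * (q - 1) * D ^ (q - 1) * (Cq * ‖z‖) := this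
    _ = (q - 1) / (q - 2) * (q - 1) * Cq * D ^ (q - 1) * ‖z‖ := by ring
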